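/- Let n ≥ 3 be an odd integer and let Z_n = {x_1,…,x_{n+1}} be the Reuleaux pyramid vertex set. Then Z_n is extremal: all pairwise distances are at most 1, and the number of unordered pairs {i,j} with 1 ≤ i < j ≤ n+1 and |x_i − x_j| = 1 is exactly 2n = 2(n+1) − 2. -/

import Mathlib

open Real MeasureTheory Metric

noncomputable def pt (a b c : ℝ) : EuclideanSpace ℝ (Fin 3) :=
  (EuclideanSpace.equiv (Fin 3) ℝ).symm ![a, b, c]

lemma dist_pt (a b c a' b' c' : ℝ) :
    dist (pt a b c) (pt a' b' c') = Real.sqrt ((a-a')^2+(b-b')^2+(c-c')^2) := by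
  simp [pt, EuclideanSpace.dist_eq, Fin.sum_univ_three, Real.dist_eq, sq_abs]

lemma cos_big (n : ℕ) (hn : 3 ≤ n) : Real.sqrt 3 / 2 ≤ Real.cos (π/(2*n)) := by
  have hn' : (3:ℝ) ≤ n := by exact_mod_cast hn
  have hπ := Real.pi_pos
  have h1 : π/(2*n) ≤ π/6 := by
    apply div_le_div_of_nonneg_left hπ.le (by norm_num)
    linarith
  have h2 : 0 ≤ π/(2*n) := by positivity
  calc Real.sqrt 3 / 2 = Real.cos (π/6) := (Real.cos_pi_div_six).symm
    _ ≤ Real.cos (π/(2*n)) := Real.cos_le_cos_of_nonneg_of_le_pi h2 (by linarith) h1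

lemma c_pos (n : ℕ) (hn : 3 ≤ n) : 0 < Real.cos (π/(2*n)) := by
  have h := cos_big n hn
  have : (0:ℝ) < Real.sqrt 3 / 2 := by positivity
  linarith

lemma dist_base (n i j : ℕ) (hn : 3 ≤ n) (hi : 1 ≤ i) (hij : i < j) (hj : j ≤ n) :
    dist (pt (Real.cos (2 * π * i / n) / (2 * Real.cos (π / (2 * n))))
             (Real.sin (2 * π * i / n) / (2 * Real.cos (π / (2 * n)))) 0)
         (pt (Real.cos (2 * π * j / n) / (2 * Real.cos (π / (2 * n))))
             (Real.sin (2 * π * j / n) / (2 * Real.cos (π / (2 * n)))) 0)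
      = Real.sin (π * (j - i : ℕ) / n) / Real.cos (π/(2*n)) := by
  have hπ := Real.pi_pos
  have hc := c_pos n hn
  have hn0 : (0:ℝ) < n := by positivity
  set c := Real.cos (π/(2*n))
  set a := 2 * π * (i:ℝ) / n
  set b := 2 * π * (j:ℝ) / n
  set θ := π * ((j - i : ℕ):ℝ) / n with hθ
  have hji : ((j - i : ℕ):ℝ) = (j:ℝ) - i := by
    push_cast [Nat.cast_sub hij.le]; ring
  have hab : a - b = -(2*θ) := by rw [hθ, hji]; ring
  have key : (Real.cos a - Real.cos b)^2 + (Real.sin a - Real.sin b)^2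
      = 4 * Real.sin θ^2 := by
    have h2 : Real.cos (a - b) = 1 - 2 * Real.sin θ^2 := by
      rw [hab, Real.cos_neg]
      nlinarith [Real.cos_two_mul θ, Real.sin_sq_add_cos_sq θ]
    have h3 := Real.cos_sub a b
    nlinarith [Real.sin_sq_add_cos_sq a, Real.sin_sq_add_cos_sq b]
  have hsq : (Real.cos a / (2*c) - Real.cos b / (2*c))^2
      + (Real.sin a / (2*c) - Real.sin b / (2*c))^2 + ((0:ℝ)-0)^2
      = (Real.sin θ / c)^2 := by
    field_simp
    nlinarith [key]
  have hθ0 : 0 ≤ θ := by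
    rw [hθ]; positivity
  have hθπ : θ ≤ π := by
    rw [hθ, hji, div_le_iff₀ hn0]
    have hjr : (j:ℝ) ≤ n := by exact_mod_cast hj
    have hir : (1:ℝ) ≤ i := by exact_mod_cast hi
    nlinarith
  have hs : 0 ≤ Real.sin θ / c :=
    div_nonneg (Real.sin_nonneg_of_nonneg_of_le_pi hθ0 hθπ) hc.le
  rw [dist_pt, hsq, Real.sqrt_sq hs]

lemma dist_apex (n i : ℕ) (hn : 3 ≤ n) :
    dist (pt (Real.cos (2 * π * i / n) / (2 * Real.cos (π / (2 * n))))
             (Real.sin (2 * π * i / n) / (2 * Real.cos (π / (2 * n)))) 0)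
         (pt 0 0 (Real.sqrt (1 - ((2 * Real.cos (π / (2 * n)))⁻¹) ^ 2))) = 1 := by
  have hc := c_pos n hn
  have hb := cos_big n hn
  set c := Real.cos (π/(2*n))
  have h3 : Real.sqrt 3 ^ 2 = 3 := Real.sq_sqrt (by norm_num)
  have hnn : 0 ≤ 1 - ((2*c)⁻¹)^2 := by
    have h4 : (3:ℝ) ≤ (2*c)^2 := by nlinarith [Real.sqrt_nonneg 3]
    have h5 : ((2*c)⁻¹)^2 = 1/(2*c)^2 := by field_simp
    have h6 : 1/(2*c)^2 ≤ 1 := by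
      rw [div_le_one (by positivity)]
      linarith
    rw [h5]; linarith
  have hsq : Real.sqrt (1 - ((2*c)⁻¹)^2) ^ 2 = 1 - ((2*c)⁻¹)^2 := Real.sq_sqrt hnn
  rw [dist_pt]
  set a := 2 * π * (i:ℝ) / n
  have : (Real.cos a / (2*c) - 0)^2 + (Real.sin a / (2*c) - 0)^2
      + (0 - Real.sqrt (1 - ((2*c)⁻¹)^2))^2 = 1 := by
    have hpyt := Real.sin_sq_add_cos_sq a
    have hexp : (0 - Real.sqrt (1 - ((2*c)⁻¹)^2))^2 = 1 - ((2*c)⁻¹)^2 := by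
      rw [zero_sub, neg_sq]; exact hsq
    rw [hexp]
    have h2c : (2*c) ≠ 0 := by positivity
    have h6 : (Real.cos a / (2*c) - 0)^2 + (Real.sin a / (2*c) - 0)^2 = ((2*c)⁻¹)^2 := by
      field_simp
      rw [mul_zero, sub_zero, sub_zero]; linarith [hpyt]
    linarith
  rw [this, Real.sqrt_one]


lemma key_sin (n k : ℕ) (hn : 3 ≤ n) (hodd : Odd n) (hk1 : 1 ≤ k) (hk2 : k ≤ n - 1) :
    Real.sin (π * k / n) ≤ Real.cos (π/(2*n)) ∧
    (Real.sin (π * k / n) = Real.cos (π/(2*n)) ↔ n = 2*k+1 ∨ n+1 = 2*k) := by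
  have hπ := Real.pi_pos
  obtain ⟨j, hj⟩ := hodd
  subst hj
  have hn0 : (0:ℝ) < (2*j+1:ℕ) := by positivity
  set N : ℕ := 2*j+1 with hN
  set t : ℤ := (N:ℤ) - 2*k with ht
  have ht0 : t ≠ 0 := by omega
  have ht1 : (1:ℤ) ≤ |t| := Int.one_le_abs ht0
  have ht2 : |t| ≤ (N:ℤ) - 2 := abs_le.mpr ⟨by omega, by omega⟩
  have ht1' : (1:ℝ) ≤ ((|t|:ℤ):ℝ) := by exact_mod_cast ht1
  have ht2' : ((|t|:ℤ):ℝ) ≤ (N:ℝ) - 2 := by exact_mod_cast ht2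
  have hsin : Real.sin (π * k / N) = Real.cos (π * ((|t|:ℤ):ℝ) / (2*N)) := by
    rw [show (π * ((|t|:ℤ):ℝ) / (2*N) : ℝ) = |π * t / (2*N)| by
      rw [abs_div, abs_mul, abs_of_pos hπ, abs_of_pos (by positivity : (0:ℝ) < 2*(N:ℝ)),
        Int.cast_abs]]
    rw [Real.cos_abs, ← Real.cos_pi_div_two_sub]
    congr 1
    have htr : (t:ℝ) = (N:ℝ) - 2*k := by push_cast [ht]; ring
    field_simp [htr]
    ring
    linarith [htr]
  have h2n : (0:ℝ) < 2*(N:ℝ) := by positivity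
  have hb1 : π/(2*N) ≤ π * ((|t|:ℤ):ℝ) / (2*N) := by
    gcongr
    nlinarith
  have hb2 : π * ((|t|:ℤ):ℝ) / (2*N) ≤ π := by
    rw [div_le_iff₀ h2n]
    nlinarith
  have hb0 : 0 ≤ π/(2*(N:ℝ)) := by positivity
  have hb0' : 0 ≤ π * ((|t|:ℤ):ℝ) / (2*N) := le_trans hb0 hb1
  constructor
  · rw [hsin]
    exact Real.cos_le_cos_of_nonneg_of_le_pi hb0 hb2 hb1
  · rw [hsin]
    constructor
    · intro h
      have heq := Real.injOn_cos ⟨hb0', hb2⟩ ⟨hb0, by linarith⟩ h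
      rw [div_eq_div_iff h2n.ne' h2n.ne'] at heq
      have h1 := mul_right_cancel₀ (ne_of_gt h2n) heq
      have habs1 : ((|t|:ℤ):ℝ) = 1 := mul_left_cancel₀ (ne_of_gt hπ) (by linarith)
      have habs2 : |t| = 1 := by exact_mod_cast habs1
      rcases (abs_eq (by norm_num : (0:ℤ) ≤ 1)).mp habs2 with h1 | h1 <;> omega
    · intro h
      have habs2 : |t| = 1 := by
        rcases h with h | h
        · have : t = 1 := by omega
          rw [this]; rfl
        · have : t = -1 := by omega
          rw [this]; rfl
      rw [habs2]
      norm_num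

/-- The Reuleaux pyramid vertex set $Z_n$ is extremal. -/
theorem stmt_0 (n : ℕ) (hn : 3 ≤ n) (hodd : Odd n)
    (x : ℕ → EuclideanSpace ℝ (Fin 3))
    (hbase : ∀ j, 1 ≤ j → j ≤ n →
      x j = pt (Real.cos (2 * π * j / n) / (2 * Real.cos (π / (2 * n))))
               (Real.sin (2 * π * j / n) / (2 * Real.cos (π / (2 * n)))) 0)
    (hapex : x (n + 1) = pt 0 0 (Real.sqrt (1 - ((2 * Real.cos (π / (2 * n)))⁻¹) ^ 2))) :
    (∀ i j, 1 ≤ i → i ≤ n + 1 → 1 ≤ j → j ≤ n + 1 → dist (x i) (x j) ≤ 1) ∧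
    ((Finset.Icc 1 (n + 1) ×ˢ Finset.Icc 1 (n + 1)).filter
        (fun p => p.1 < p.2 ∧ dist (x p.1) (x p.2) = 1)).card = 2 * n := by
  obtain ⟨m, hm⟩ := hodd
  have hm1 : 1 ≤ m := by omega
  have hc := c_pos n hn
  -- characterization of distances for i < j
  have hchar : ∀ i j, 1 ≤ i → i < j → j ≤ n + 1 →
      dist (x i) (x j) ≤ 1 ∧
      (dist (x i) (x j) = 1 ↔ j = n + 1 ∨ (j ≤ n ∧ (j - i = m ∨ j - i = m + 1))) := by
    intro i j hi hij hj
    rcases eq_or_lt_of_le hj with hj1 | hj1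
    · -- apex case
      have hin : i ≤ n := by omega
      rw [hj1, hapex, hbase i hi hin, dist_apex n i hn]
      constructor
      · exact le_refl 1
      · simp [hj1]
    · -- base case
      have hjn : j ≤ n := by omega
      rw [hbase i hi (by omega), hbase j (by omega) hjn, dist_base n i j hn hi hij hjn]
      have hk1 : 1 ≤ j - i := by omega
      have hk2 : j - i ≤ n - 1 := by omega
      obtain ⟨hle, heq⟩ := key_sin n (j - i) hn ⟨m, hm⟩ hk1 hk2
      constructor
      · rw [div_le_one hc]; exact hle
      · rw [div_eq_one_iff_eq hc.ne']
        rw [heq]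
        constructor
        · intro h; right; exact ⟨hjn, by omega⟩
        · intro h
          rcases h with h | ⟨_, h⟩
          · omega
          · omega
  constructor
  · intro i j hi hi' hj hj'
    rcases lt_trichotomy i j with h | h | h
    · exact (hchar i j hi h hj').1
    · rw [h, dist_self]; norm_num
    · rw [dist_comm]; exact (hchar j i hj h hi').1
  · -- counting
    classical
    set F1 := (Finset.Icc 1 n).image (fun i => (i, n+1)) with hF1
    set F2 := (Finset.Icc 1 (m+1)).image (fun i => (i, i+m)) with hF2
    set F3 := (Finset.Icc 1 m).image (fun i => (i, i+m+1)) with hF3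
    have hset : ((Finset.Icc 1 (n + 1) ×ˢ Finset.Icc 1 (n + 1)).filter
        (fun p => p.1 < p.2 ∧ dist (x p.1) (x p.2) = 1)) = F1 ∪ F2 ∪ F3 := by
      ext ⟨i, j⟩
      simp only [Finset.mem_filter, Finset.mem_product, Finset.mem_Icc, Finset.mem_union,
        hF1, hF2, hF3, Finset.mem_image, Prod.mk.injEq]
      constructor
      · rintro ⟨⟨⟨hi1, hi2⟩, hj1, hj2⟩, hij, hd⟩
        have := ((hchar i j hi1 hij hj2).2).mp hd
        rcases this with h | ⟨hjn, h | h⟩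
        · exact Or.inl (Or.inl ⟨i, ⟨hi1, by omega⟩, rfl, h.symm⟩)
        · exact Or.inl (Or.inr ⟨i, ⟨hi1, by omega⟩, rfl, by omega⟩)
        · exact Or.inr ⟨i, ⟨hi1, by omega⟩, rfl, by omega⟩
      · rintro ((h | h) | h)
        · obtain ⟨a, ⟨ha1, ha2⟩, hia, hja⟩ := h
          subst hia; subst hja
          refine ⟨⟨⟨ha1, by omega⟩, by omega, le_refl _⟩, by omega, ?_⟩
          exact ((hchar a (n+1) ha1 (by omega) (le_refl _)).2).mpr (Or.inl rfl)
        · obtain ⟨a, ⟨ha1, ha2⟩, hia, hja⟩ := h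
          subst hia; subst hja
          refine ⟨⟨⟨ha1, by omega⟩, by omega, by omega⟩, by omega, ?_⟩
          exact ((hchar a (a+m) ha1 (by omega) (by omega)).2).mpr (Or.inr ⟨by omega, by omega⟩)
        · obtain ⟨a, ⟨ha1, ha2⟩, hia, hja⟩ := h
          subst hia; subst hja
          refine ⟨⟨⟨ha1, by omega⟩, by omega, by omega⟩, by omega, ?_⟩
          exact ((hchar a (a+m+1) ha1 (by omega) (by omega)).2).mpr
            (Or.inr ⟨by omega, by omega⟩)
    rw [hset]
    have hinj1 : Function.Injective (fun i : ℕ => (i, n+1)) := fun a b h => by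
      simpa using congrArg Prod.fst h
    have hinj2 : Function.Injective (fun i : ℕ => (i, i+m)) := fun a b h => by
      simpa using congrArg Prod.fst h
    have hinj3 : Function.Injective (fun i : ℕ => (i, i+m+1)) := fun a b h => by
      simpa using congrArg Prod.fst h
    have hd12 : Disjoint F1 F2 := by
      rw [Finset.disjoint_left]
      rintro ⟨i, j⟩ h1 h2
      simp only [hF1, hF2, Finset.mem_image, Finset.mem_Icc, Prod.mk.injEq] at h1 h2
      obtain ⟨a, ⟨_, ha⟩, rfl, rfl⟩ := h1
      obtain ⟨b, ⟨_, hb⟩, rfl, h⟩ := h2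
      omega
    have hd13 : Disjoint F1 F3 := by
      rw [Finset.disjoint_left]
      rintro ⟨i, j⟩ h1 h2
      simp only [hF1, hF3, Finset.mem_image, Finset.mem_Icc, Prod.mk.injEq] at h1 h2
      obtain ⟨a, ⟨_, ha⟩, rfl, rfl⟩ := h1
      obtain ⟨b, ⟨_, hb⟩, rfl, h⟩ := h2
      omega
    have hd23 : Disjoint F2 F3 := by
      rw [Finset.disjoint_left]
      rintro ⟨i, j⟩ h1 h2
      simp only [hF2, hF3, Finset.mem_image, Finset.mem_Icc, Prod.mk.injEq] at h1 h2
      obtain ⟨a, ⟨_, ha⟩, rfl, rfl⟩ := h1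
      obtain ⟨b, ⟨_, hb⟩, rfl, h⟩ := h2
      omega
    rw [Finset.card_union_of_disjoint (by
      rw [Finset.disjoint_union_left]; exact ⟨hd13, hd23⟩),
      Finset.card_union_of_disjoint hd12,
      Finset.card_image_of_injective _ hinj1,
      Finset.card_image_of_injective _ hinj2,
      Finset.card_image_of_injective _ hinj3]
    simp [Nat.card_Icc]
    omega
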